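/- Pinsker's inequality for trees: For two leaf distributions P_L and P_{L'} on the same finite rooted tree with full support, D(P_L ‖ P_{L'})/E[w(L)] ≥ (1/(2 ln 2)) · Σ_{j∈B} P_B(j) · d(P_{S_j}, P_{S'_j})², where d is total variational distance d(P,Q) = Σ_a |P(a) - Q(a)| and P_B(j) = Q_j/E[w(L)]. -/

import Mathlib

/-- A finite rooted tree with data of type `α` at the leaves. -/
inductive PTree (α : Type) : Type where
  | leaf (a : α) : PTree α
  | node (n : ℕ) (children : Fin n → PTree α) : PTree α

namespace PTree

/-- Node probability `Q_j`: sum of the probabilities of the leaves below the node. -/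
def Q {α : Type} (pr : α → ℝ) : PTree α → ℝ
  | .leaf a => pr a
  | .node n c => ∑ k : Fin n, Q pr (c k)

/-- All leaf probabilities are positive and every branching node has at least one
successor (so all node probabilities `Q_j` are positive). -/
def pos {α : Type} (pr : α → ℝ) : PTree α → Prop
  | .leaf a => 0 < pr a
  | .node n c => 0 < n ∧ ∀ k : Fin n, pos pr (c k)

/-- Expected value `E[f(L)]` over the leaves; nodes are identified by their
address (list of child indices from the root). -/
def leafExp {α : Type} (pr : α → ℝ) (f : List ℕ → ℝ) : PTree α → List ℕ → ℝ
  | .leaf a, addr => pr a * f addr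
  | .node n c, addr => ∑ k : Fin n, leafExp pr f (c k) (addr ++ [k.val])

/-- Informational divergence of the leaf distributions:
`D(P_L ‖ P_{L'}) = Σ_i P_L(i) log₂ (P_L(i)/P_{L'}(i))`. -/
noncomputable def leafDiv {α : Type} (p q : α → ℝ) : PTree α → ℝ
  | .leaf a => p a * Real.logb 2 (p a / q a)
  | .node n c => ∑ k : Fin n, leafDiv p q (c k)

/-- Variational distance `d(P_{S_j}, P_{S'_j})` between the two branching
distributions at a branching node with children `c` and node probabilities. -/
noncomputable def branchTV {α : Type} (p q : α → ℝ) (n : ℕ) (c : Fin n → PTree α) : ℝ :=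
  ∑ k : Fin n, |Q p (c k) / Q p (.node n c) - Q q (c k) / Q q (.node n c)|

/-- `Σ_{j∈B} P_B(j) · d(P_{S_j}, P_{S'_j})²` with `P_B(j) = Q_j / W`. -/
noncomputable def branchTVsqNorm {α : Type} (p q : α → ℝ) (W : ℝ) : PTree α → ℝ
  | .leaf _ => 0
  | .node n c =>
      (Q p (.node n c) / W) * (branchTV p q n c) ^ 2
      + ∑ k : Fin n, branchTVsqNorm p q W (c k)


open Real Set in
/-- Key pointwise inequality: for `t > 0`, `3(t-1)²/(2(t+2)) ≤ t log t - t + 1`. -/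
lemma key_pointwise' {t : ℝ} (ht : 0 < t) :
    3 * (t - 1) ^ 2 / (2 * (t + 2)) ≤ t * Real.log t - t + 1 := by
  set F : ℝ → ℝ := fun t => t * Real.log t - t + 1 - 3 * (t - 1) ^ 2 / (2 * (t + 2)) with hF
  set G : ℝ → ℝ := fun t => Real.log t - 3 * (t - 1) * (t + 5) / (2 * (t + 2) ^ 2) with hG
  have hden : ∀ x : ℝ, 0 < x → (2 : ℝ) * (x + 2) ≠ 0 := fun x hx => by positivity
  have hF' : ∀ x : ℝ, 0 < x → HasDerivAt F (G x) x := by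
    intro x hx
    have h1 : HasDerivAt (fun y : ℝ => y * Real.log y) (Real.log x + 1) x :=
      Real.hasDerivAt_mul_log hx.ne'
    have h2 : HasDerivAt (fun y : ℝ => 3 * (y - 1) ^ 2) (3 * (2 * (x - 1))) x := by
      have := ((hasDerivAt_id x).sub_const 1).pow 2
      simpa using this.const_mul 3
    have h3 : HasDerivAt (fun y : ℝ => 2 * (y + 2)) 2 x := by
      simpa using ((hasDerivAt_id x).add_const 2).const_mul 2
    have h4 := h2.div h3 (hden x hx)
    have h5 := ((h1.sub (hasDerivAt_id x)).add_const 1).sub h4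
    have heq : (3 * (2 * (x - 1)) * (2 * (x + 2)) - 3 * (x - 1) ^ 2 * 2) / (2 * (x + 2)) ^ 2
        = 3 * (x - 1) * (x + 5) / (2 * (x + 2) ^ 2) := by
      rw [div_eq_div_iff (by positivity) (by positivity)]
      ring
    refine h5.congr_deriv ?_
    rw [heq]
    simp [hG]
  have hG' : ∀ x : ℝ, 0 < x →
      HasDerivAt G ((x - 1) ^ 2 * (x + 8) / (x * (x + 2) ^ 3)) x := by
    intro x hx
    have hden2 : (2 : ℝ) * (x + 2) ^ 2 ≠ 0 := by positivity
    have h1 : HasDerivAt Real.log x⁻¹ x := Real.hasDerivAt_log hx.ne'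
    have h2 : HasDerivAt (fun y : ℝ => 3 * (y - 1) * (y + 5))
        (3 * (x - 1) + 3 * (x + 5)) x := by
      have ha : HasDerivAt (fun y : ℝ => 3 * (y - 1)) 3 x := by
        simpa using ((hasDerivAt_id x).sub_const 1).const_mul 3
      have hb : HasDerivAt (fun y : ℝ => y + 5) 1 x := (hasDerivAt_id x).add_const 5
      have := ha.mul hb
      exact this.congr_deriv (by ring)
    have h3 : HasDerivAt (fun y : ℝ => 2 * (y + 2) ^ 2) (2 * (2 * (x + 2))) x := by
      have := ((hasDerivAt_id x).add_const 2).pow 2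
      simpa [mul_comm] using this.const_mul 2
    have h4 := h2.div h3 hden2
    have h5 := h1.sub h4
    have hx2 : x + 2 ≠ 0 := by positivity
    have heq : ((3 * (x - 1) + 3 * (x + 5)) * (2 * (x + 2) ^ 2)
          - 3 * (x - 1) * (x + 5) * (2 * (2 * (x + 2)))) / (2 * (x + 2) ^ 2) ^ 2
        = 27 / (x + 2) ^ 3 := by
      rw [div_eq_div_iff (by positivity) (by positivity)]
      ring
    refine h5.congr_deriv ?_
    rw [heq, inv_eq_one_div, div_sub_div _ _ hx.ne' (by positivity),
      div_eq_div_iff (by positivity) (by positivity)]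
    ring
  have hGmono : MonotoneOn G (Ioi (0:ℝ)) := by
    apply monotoneOn_of_deriv_nonneg (convex_Ioi 0)
    · exact fun x hx => (hG' x hx).continuousAt.continuousWithinAt
    · intro x hx
      rw [interior_Ioi] at hx
      exact (hG' x hx).differentiableAt.differentiableWithinAt
    · intro x hx
      rw [interior_Ioi] at hx
      rw [(hG' x hx).deriv]
      have hx' : (0:ℝ) < x := hx
      positivity
  have hG1 : G 1 = 0 := by simp [hG]
  have hF1 : F 1 = 0 := by norm_num [hF]
  have hFx : F t ≥ 0 := by
    rcases le_total 1 t with h | h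
    · have hmono : MonotoneOn F (Ici (1:ℝ)) := by
        apply monotoneOn_of_deriv_nonneg (convex_Ici 1)
        · intro x hx
          exact (hF' x (lt_of_lt_of_le one_pos hx)).continuousAt.continuousWithinAt
        · intro x hx
          rw [interior_Ici] at hx
          exact (hF' x (lt_trans one_pos hx)).differentiableAt.differentiableWithinAt
        · intro x hx
          rw [interior_Ici] at hx
          rw [(hF' x (lt_trans one_pos hx)).deriv]
          have := hGmono (mem_Ioi.2 one_pos) (mem_Ioi.2 (lt_trans one_pos hx)) hx.le
          rw [hG1] at this; exact this
      have := hmono (self_mem_Ici) (mem_Ici.2 h) h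
      rwa [hF1] at this
    · have hanti : AntitoneOn F (Ioc (0:ℝ) 1) := by
        apply antitoneOn_of_deriv_nonpos (convex_Ioc 0 1)
        · intro x hx
          exact (hF' x hx.1).continuousAt.continuousWithinAt
        · intro x hx
          rw [interior_Ioc] at hx
          exact (hF' x hx.1).differentiableAt.differentiableWithinAt
        · intro x hx
          rw [interior_Ioc] at hx
          rw [(hF' x hx.1).deriv]
          have := hGmono (mem_Ioi.2 hx.1) (mem_Ioi.2 one_pos) hx.2.le
          rw [hG1] at this; exact this
      have := hanti (mem_Ioc.2 ⟨ht, h⟩) (right_mem_Ioc.2 one_pos) h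
      rwa [hF1] at this
  simp only [hF] at hFx
  linarith

lemma pointwise_pq {p q : ℝ} (hp : 0 < p) (hq : 0 < q) :
    p - q + 3 * (p - q) ^ 2 / (2 * (p + 2 * q)) ≤ p * Real.log (p / q) := by
  have h := key_pointwise' (div_pos hp hq)
  have h2 := mul_le_mul_of_nonneg_left h hq.le
  have e1 : q * (3 * (p / q - 1) ^ 2 / (2 * (p / q + 2))) = 3 * (p - q) ^ 2 / (2 * (p + 2 * q)) := by
    field_simp
  have e2 : q * (p / q * Real.log (p / q) - p / q + 1) = p * Real.log (p / q) - p + q := by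
    field_simp
  rw [e1, e2] at h2
  linarith

/-- Pinsker's inequality for distributions on `Fin n` (divergence in nats). -/
lemma pinsker_fin {n : ℕ} (r s : Fin n → ℝ) (hr : ∀ k, 0 < r k) (hs : ∀ k, 0 < s k)
    (hr1 : ∑ k, r k = 1) (hs1 : ∑ k, s k = 1) :
    (∑ k, |r k - s k|) ^ 2 / 2 ≤ ∑ k, r k * Real.log (r k / s k) := by
  have hg : ∀ k ∈ Finset.univ, (0:ℝ) < r k + 2 * s k := fun k _ => by
    have := hr k; have := hs k; linarith
  have hCS := Finset.sq_sum_div_le_sum_sq_div Finset.univ (fun k => |r k - s k|) hg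
  have hsum3 : ∑ k : Fin n, (r k + 2 * s k) = 3 := by
    rw [Finset.sum_add_distrib, ← Finset.mul_sum, hr1, hs1]; norm_num
  rw [hsum3] at hCS
  have hpt : ∀ k ∈ Finset.univ, r k - s k + 3 * (r k - s k) ^ 2 / (2 * (r k + 2 * s k))
      ≤ r k * Real.log (r k / s k) :=
    fun k _ => pointwise_pq (hr k) (hs k)
  have hsum := Finset.sum_le_sum hpt
  have hzero : ∑ k : Fin n, (r k - s k) = 0 := by
    rw [Finset.sum_sub_distrib, hr1, hs1]; ring
  have hsplit : ∑ k : Fin n, (r k - s k + 3 * (r k - s k) ^ 2 / (2 * (r k + 2 * s k)))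
      = (3/2) * ∑ k : Fin n, (r k - s k) ^ 2 / (r k + 2 * s k) := by
    rw [Finset.sum_add_distrib, hzero, zero_add, Finset.mul_sum]
    congr 1; funext k
    rw [eq_comm]
    field_simp
  have habs : ∑ k : Fin n, |r k - s k| ^ 2 / (r k + 2 * s k)
      = ∑ k : Fin n, (r k - s k) ^ 2 / (r k + 2 * s k) := by
    congr 1; funext k; rw [sq_abs]
  rw [habs] at hCS
  calc (∑ k, |r k - s k|) ^ 2 / 2 = (3/2) * ((∑ k, |r k - s k|) ^ 2 / 3) := by ring
    _ ≤ (3/2) * ∑ k : Fin n, (r k - s k) ^ 2 / (r k + 2 * s k) := by linarith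
    _ = ∑ k : Fin n, (r k - s k + 3 * (r k - s k) ^ 2 / (2 * (r k + 2 * s k))) := hsplit.symm
    _ ≤ _ := hsum

/-- Divergence of the leaf distributions in nats. -/
noncomputable def nDiv {α : Type} (p q : α → ℝ) : PTree α → ℝ
  | .leaf a => p a * Real.log (p a / q a)
  | .node n c => ∑ k : Fin n, nDiv p q (c k)

lemma Q_pos {α : Type} (pr : α → ℝ) : ∀ t : PTree α, pos pr t → 0 < Q pr t
  | .leaf _, h => h
  | .node n c, h => by
      simp only [Q]
      exact Finset.sum_pos (fun k _ => Q_pos pr (c k) (h.2 k)) ⟨⟨0, h.1⟩, Finset.mem_univ _⟩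

lemma leafDiv_eq_nDiv {α : Type} (p q : α → ℝ) :
    ∀ t : PTree α, leafDiv p q t = nDiv p q t / Real.log 2
  | .leaf a => by rw [leafDiv, nDiv, Real.logb, mul_div_assoc]
  | .node n c => by
      rw [leafDiv, nDiv, Finset.sum_div]
      exact Finset.sum_congr rfl fun k _ => leafDiv_eq_nDiv p q (c k)

lemma branchTVsqNorm_scale {α : Type} (p q : α → ℝ) (W : ℝ) :
    ∀ t : PTree α, branchTVsqNorm p q W t = branchTVsqNorm p q 1 t / W
  | .leaf _ => by rw [branchTVsqNorm, branchTVsqNorm, zero_div]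
  | .node n c => by
      rw [branchTVsqNorm, branchTVsqNorm,
        Finset.sum_congr rfl fun k _ => branchTVsqNorm_scale p q W (c k),
        ← Finset.sum_div, div_one, div_mul_eq_mul_div, ← add_div]

/-- The main induction: chain rule for divergence plus Pinsker at each branching node. -/
lemma main_ineq {α : Type} (p q : α → ℝ) : ∀ t : PTree α, pos p t → pos q t →
    Q p t * Real.log (Q p t / Q q t) + (1/2) * branchTVsqNorm p q 1 t ≤ nDiv p q t
  | .leaf a, _, _ => by simp [Q, branchTVsqNorm, nDiv]
  | .node n c, hp, hq => by
      have hA : 0 < Q p (PTree.node n c) := Q_pos p _ hp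
      have hB : 0 < Q q (PTree.node n c) := Q_pos q _ hq
      have hak : ∀ k, 0 < Q p (c k) := fun k => Q_pos p _ (hp.2 k)
      have hbk : ∀ k, 0 < Q q (c k) := fun k => Q_pos q _ (hq.2 k)
      have hQA : Q p (PTree.node n c) = ∑ k : Fin n, Q p (c k) := rfl
      have hQB : Q q (PTree.node n c) = ∑ k : Fin n, Q q (c k) := rfl
      have hr1 : ∑ k : Fin n, Q p (c k) / Q p (PTree.node n c) = 1 := by
        rw [← Finset.sum_div, ← hQA, div_self hA.ne']
      have hs1 : ∑ k : Fin n, Q q (c k) / Q q (PTree.node n c) = 1 := by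
        rw [← Finset.sum_div, ← hQB, div_self hB.ne']
      have hP : (∑ k : Fin n, |Q p (c k) / Q p (PTree.node n c)
              - Q q (c k) / Q q (PTree.node n c)|) ^ 2 / 2
          ≤ ∑ k : Fin n, (Q p (c k) / Q p (PTree.node n c)) *
              Real.log ((Q p (c k) / Q p (PTree.node n c)) / (Q q (c k) / Q q (PTree.node n c))) :=
        pinsker_fin (fun k => Q p (c k) / Q p (PTree.node n c))
          (fun k => Q q (c k) / Q q (PTree.node n c))
          (fun k => div_pos (hak k) hA) (fun k => div_pos (hbk k) hB) hr1 hs1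
      have hlog : ∀ k, Q p (c k) * Real.log (Q p (c k) / Q q (c k))
          = Q p (PTree.node n c) * ((Q p (c k) / Q p (PTree.node n c)) *
              Real.log ((Q p (c k) / Q p (PTree.node n c)) / (Q q (c k) / Q q (PTree.node n c))))
            + Q p (c k) * Real.log (Q p (PTree.node n c) / Q q (PTree.node n c)) := by
        intro k
        have h1 : Q p (c k) / Q q (c k)
            = (Q p (c k) / Q p (PTree.node n c)) / (Q q (c k) / Q q (PTree.node n c))
              * (Q p (PTree.node n c) / Q q (PTree.node n c)) := by
          have ha' := (hak k).ne'
          have hb' := (hbk k).ne'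
          have hA' := hA.ne'
          have hB' := hB.ne'
          field_simp
        have h2 : (Q p (c k) / Q p (PTree.node n c)) / (Q q (c k) / Q q (PTree.node n c)) ≠ 0 := by
          have := hak k; have := hbk k; positivity
        rw [h1, Real.log_mul h2 (div_pos hA hB).ne', mul_add]
        congr 1
        rw [← mul_assoc, mul_comm (Q p (PTree.node n c)), div_mul_cancel₀ _ hA.ne']
      have hsum : ∑ k : Fin n, Q p (c k) * Real.log (Q p (c k) / Q q (c k))
          = Q p (PTree.node n c) * (∑ k : Fin n, (Q p (c k) / Q p (PTree.node n c)) *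
              Real.log ((Q p (c k) / Q p (PTree.node n c)) / (Q q (c k) / Q q (PTree.node n c))))
            + Q p (PTree.node n c) * Real.log (Q p (PTree.node n c) / Q q (PTree.node n c)) := by
        rw [Finset.sum_congr rfl fun k _ => hlog k, Finset.sum_add_distrib, ← Finset.mul_sum,
          ← Finset.sum_mul, ← hQA]
      have hih : ∑ k : Fin n, (Q p (c k) * Real.log (Q p (c k) / Q q (c k))
            + (1/2) * branchTVsqNorm p q 1 (c k)) ≤ ∑ k : Fin n, nDiv p q (c k) :=
        Finset.sum_le_sum fun k _ => main_ineq p q (c k) (hp.2 k) (hq.2 k)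
      rw [Finset.sum_add_distrib, hsum, ← Finset.mul_sum] at hih
      have hP' := mul_le_mul_of_nonneg_left hP hA.le
      rw [nDiv, branchTVsqNorm, branchTV, div_one]
      nlinarith [hP', hih]

/-- Pinsker's inequality for trees:
`D(P_L ‖ P_{L'})/E[w(L)] ≥ (1/(2 ln 2)) Σ_{j∈B} P_B(j) d(P_{S_j}, P_{S'_j})²`. -/
theorem pinsker_tree {α : Type} (p q : α → ℝ) (t : PTree α)
    (hp : pos p t) (hq : pos q t) (hQp : Q p t = 1) (hQq : Q q t = 1)
    (hW : 0 < leafExp p (fun addr => (addr.length : ℝ)) t []) :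
    leafDiv p q t / leafExp p (fun addr => (addr.length : ℝ)) t []
      ≥ (1 / (2 * Real.log 2)) *
          branchTVsqNorm p q (leafExp p (fun addr => (addr.length : ℝ)) t []) t := by
  have hL2 : (0:ℝ) < Real.log 2 := Real.log_pos one_lt_two
  have hm := main_ineq p q t hp hq
  rw [hQp, hQq] at hm
  have hm' : (1/2) * branchTVsqNorm p q 1 t ≤ nDiv p q t := by
    simpa using hm
  have hfin : (1 / (2 * Real.log 2)) * branchTVsqNorm p q 1 t ≤ nDiv p q t / Real.log 2 := by
    rw [le_div_iff₀ hL2]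
    have : 1 / (2 * Real.log 2) * branchTVsqNorm p q 1 t * Real.log 2
        = (1/2) * branchTVsqNorm p q 1 t := by
      field_simp
    rw [this]
    exact hm'
  rw [ge_iff_le, leafDiv_eq_nDiv p q t,
    branchTVsqNorm_scale p q (leafExp p (fun addr => (addr.length : ℝ)) t []) t,
    ← mul_div_assoc, div_div]
  rw [div_le_div_iff₀ hW (by positivity)]
  calc 1 / (2 * Real.log 2) * branchTVsqNorm p q 1 t
        * (Real.log 2 * leafExp p (fun addr => (addr.length : ℝ)) t [])
      = (1 / (2 * Real.log 2) * branchTVsqNorm p q 1 t * Real.log 2)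
        * leafExp p (fun addr => (addr.length : ℝ)) t [] := by ring
    _ ≤ (nDiv p q t / Real.log 2 * Real.log 2)
        * leafExp p (fun addr => (addr.length : ℝ)) t [] := by
        apply mul_le_mul_of_nonneg_right _ hW.le
        exact mul_le_mul_of_nonneg_right hfin hL2.le
    _ = nDiv p q t * leafExp p (fun addr => (addr.length : ℝ)) t [] := by
        rw [div_mul_cancel₀ _ hL2.ne']

end PTree
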